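/- Let d ≥ 1, η > 0, α ∈ (0,1), T ≥ 1. Consider the fixed-share forecaster defined by p_1 = (1/d,…,1/d), v_{j,t+1} = p_{j,t} e^{-η ℓ_{j,t}} / Σ_i p_{i,t} e^{-η ℓ_{i,t}}, and p_{j,t+1} = α/d + (1-α) v_{j,t+1}, for loss vectors ℓ_t ∈ [0,1]^d. Then for every sequence u_1,…,u_T ∈ ℝ_+^d, Σ_{t=1}^T ‖u_t‖_1 (p_t·ℓ_t) - Σ_{t=1}^T u_t·ℓ_t ≤ (‖u_1‖_1 ln d)/η + (η/8) Σ_{t=1}^T ‖u_t‖_1 + (m(u_1^T)/η) ln(d/α) + ((Σ_{t=2}^T ‖u_t‖_1 - m(u_1^T))/η) ln(1/(1-α)), where m(u_1^T) = Σ_{t=2}^T D_TV(u_t, u_{t-1}). -/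

import Mathlib

open Real Finset

lemma bernoulli_aux (p : ℝ) (hp0 : 0 ≤ p) (hp1 : p ≤ 1) (h : ℝ) :
    Real.log (1 - p + p * Real.exp h) ≤ p * h + h ^ 2 / 8 := by
  set D : ℝ → ℝ := fun x => 1 - p + p * Real.exp x with hDdef
  have hD : ∀ x, 0 < D x := by
    intro x
    have := Real.exp_pos x
    rcases eq_or_lt_of_le hp1 with hp | hp
    · simp only [hDdef, ← hp]; nlinarith
    · simp only [hDdef]; nlinarith
  set f : ℝ → ℝ := fun x => Real.log (D x) - p * x - x ^ 2 / 8 with hfdef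
  set g : ℝ → ℝ := fun x => p * Real.exp x / D x - p - x / 4 with hgdef
  have hD' : ∀ x, HasDerivAt D (p * Real.exp x) x := by
    intro x
    exact ((Real.hasDerivAt_exp x).const_mul p).const_add (1 - p)
  have hf' : ∀ x, HasDerivAt f (g x) x := by
    intro x
    have h1 : HasDerivAt (fun x => Real.log (D x)) (p * Real.exp x / D x) x :=
      (hD' x).log (hD x).ne'
    have h2 : HasDerivAt (fun x : ℝ => p * x) p x := (hasDerivAt_id x).const_mul p |>.congr_deriv (by ring)
    have h3 : HasDerivAt (fun x : ℝ => x ^ 2 / 8) (x / 4) x := by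
      simpa using (hasDerivAt_pow 2 x).div_const 8 |>.congr_deriv (by ring)
    exact (h1.sub h2).sub h3
  have hg' : ∀ x, HasDerivAt g (p * Real.exp x * (1 - p) / (D x) ^ 2 - 1 / 4) x := by
    intro x
    have h1 : HasDerivAt (fun x => p * Real.exp x / D x)
        ((p * Real.exp x * D x - p * Real.exp x * (p * Real.exp x)) / (D x) ^ 2) x :=
      ((Real.hasDerivAt_exp x).const_mul p).div (hD' x) (hD x).ne'
    have h2 : HasDerivAt (fun x : ℝ => p + x / 4) (1 / 4) x := by
      simpa using ((hasDerivAt_id x).div_const 4).const_add p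
    have := h1.sub h2
    have heq : (p * Real.exp x * D x - p * Real.exp x * (p * Real.exp x)) / (D x) ^ 2
        = p * Real.exp x * (1 - p) / (D x) ^ 2 := by
      simp only [hDdef]; ring_nf
    rw [heq] at this
    refine this.congr_of_eventuallyEq (Filter.Eventually.of_forall fun y => ?_)
    simp only [hgdef, Pi.sub_apply]; ring
  have hgmono : Antitone g := by
    apply antitone_of_deriv_nonpos
    · exact fun x => (hg' x).differentiableAt
    · intro x
      rw [(hg' x).deriv]
      have hsq : 0 ≤ ((1 - p) - p * Real.exp x) ^ 2 := sq_nonneg _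
      have hDx := hD x
      have : p * Real.exp x * (1 - p) / (D x) ^ 2 ≤ 1 / 4 := by
        rw [div_le_iff₀ (by positivity)]
        simp only [hDdef] at hsq hDx ⊢
        nlinarith
      linarith
  have hg0 : g 0 = 0 := by simp [hgdef, hDdef]
  have hf0 : f 0 = 0 := by simp [hfdef, hDdef]
  have hfd : Differentiable ℝ f := fun x => (hf' x).differentiableAt
  have key : f h ≤ 0 := by
    rcases le_total 0 h with hh | hh
    · have hA : AntitoneOn f (Set.Ici 0) := by
        apply antitoneOn_of_deriv_nonpos (convex_Ici 0) hfd.continuous.continuousOn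
          (fun x _ => (hfd x).differentiableWithinAt)
        intro x hx
        rw [interior_Ici] at hx
        rw [(hf' x).deriv]
        have : g x ≤ g 0 := hgmono (le_of_lt hx)
        linarith [hg0 ▸ this]
      have := hA Set.self_mem_Ici (Set.mem_Ici.2 hh) hh
      linarith [hf0 ▸ this]
    · have hM : MonotoneOn f (Set.Iic 0) := by
        apply monotoneOn_of_deriv_nonneg (convex_Iic 0) hfd.continuous.continuousOn
          (fun x _ => (hfd x).differentiableWithinAt)
        intro x hx
        rw [interior_Iic] at hx
        rw [(hf' x).deriv]
        have : g 0 ≤ g x := hgmono (le_of_lt hx)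
        linarith [hg0 ▸ this]
      have := hM (Set.mem_Iic.2 hh) Set.self_mem_Iic hh
      linarith [hf0 ▸ this]
  simp only [hfdef, hDdef] at key
  linarith

lemma hoeffding_fin {d : ℕ} (hd : 0 < d) (w x : Fin d → ℝ) (hw : ∀ i, 0 < w i)
    (hsum : ∑ i, w i = 1) (hx : ∀ i, x i ∈ Set.Icc (0 : ℝ) 1) (s : ℝ) :
    Real.log (∑ i, w i * Real.exp (s * x i)) ≤ s * (∑ i, w i * x i) + s ^ 2 / 8 := by
  haveI : Nonempty (Fin d) := Fin.pos_iff_nonempty.1 hd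
  set μ := ∑ i, w i * x i with hμ
  have hμ0 : 0 ≤ μ := Finset.sum_nonneg fun i _ => mul_nonneg (hw i).le (hx i).1
  have hμ1 : μ ≤ 1 := by
    rw [← hsum]
    exact Finset.sum_le_sum fun i _ => by nlinarith [(hw i).le, (hx i).2]
  have hpos : 0 < ∑ i, w i * Real.exp (s * x i) :=
    Finset.sum_pos (fun i _ => mul_pos (hw i) (Real.exp_pos _)) Finset.univ_nonempty
  have step : ∑ i, w i * Real.exp (s * x i) ≤ 1 - μ + μ * Real.exp s := by
    have per : ∀ i, Real.exp (s * x i) ≤ (1 - x i) + x i * Real.exp s := by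
      intro i
      have hc := convexOn_exp.2 (Set.mem_univ (0:ℝ)) (Set.mem_univ s)
        (by linarith [(hx i).2] : (0:ℝ) ≤ 1 - x i) (hx i).1 (by ring)
      simpa [mul_comm, Real.exp_zero] using hc
    calc ∑ i, w i * Real.exp (s * x i) ≤ ∑ i, w i * ((1 - x i) + x i * Real.exp s) :=
          Finset.sum_le_sum fun i _ => mul_le_mul_of_nonneg_left (per i) (hw i).le
      _ = (∑ i, w i) - μ + μ * Real.exp s := by
          simp only [hμ, ← Finset.sum_sub_distrib, Finset.sum_mul, ← Finset.sum_add_distrib]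
          exact Finset.sum_congr rfl fun i _ => by ring
      _ = 1 - μ + μ * Real.exp s := by rw [hsum]
  calc Real.log (∑ i, w i * Real.exp (s * x i)) ≤ Real.log (1 - μ + μ * Real.exp s) :=
        Real.log_le_log hpos step
    _ ≤ μ * s + s ^ 2 / 8 := bernoulli_aux μ hμ0 hμ1 s
    _ = s * μ + s ^ 2 / 8 := by ring

/-- `D_TV(x,y) = Σ_{i : x_i ≥ y_i} (x_i - y_i)`. -/
noncomputable def dtv {d : ℕ} (x y : Fin d → ℝ) : ℝ :=
  ∑ i ∈ Finset.univ.filter (fun i => y i ≤ x i), (x i - y i)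

/-- Theorem 2 of the paper: the generalized shifting regret bound for the
fixed-share forecaster. -/
theorem stmt5 (d T : ℕ) (hd : 1 ≤ d) (hT : 1 ≤ T) (η α : ℝ) (hη : 0 < η)
    (hα : α ∈ Set.Ioo (0 : ℝ) 1)
    (ℓ p v : ℕ → Fin d → ℝ) (u : ℕ → Fin d → ℝ)
    (hℓ : ∀ t ∈ Finset.Icc 1 T, ∀ j, ℓ t j ∈ Set.Icc (0 : ℝ) 1)
    (hp1 : ∀ j, p 1 j = 1 / d)
    (hv : ∀ t ∈ Finset.Icc 1 T, ∀ j,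
      v (t + 1) j = p t j * Real.exp (-η * ℓ t j) / ∑ i, p t i * Real.exp (-η * ℓ t i))
    (hshare : ∀ t ∈ Finset.Icc 1 T, ∀ j,
      p (t + 1) j = α / d + (1 - α) * v (t + 1) j)
    (hu : ∀ t ∈ Finset.Icc 1 T, ∀ i, 0 ≤ u t i) :
    ∑ t ∈ Finset.Icc 1 T, (∑ i, u t i) * (∑ i, p t i * ℓ t i)
        - ∑ t ∈ Finset.Icc 1 T, ∑ i, u t i * ℓ t i
      ≤ (∑ i, u 1 i) * Real.log d / η
        + (η / 8) * ∑ t ∈ Finset.Icc 1 T, ∑ i, u t i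
        + (∑ t ∈ Finset.Icc 2 T, dtv (u t) (u (t - 1))) / η * Real.log (d / α)
        + (∑ t ∈ Finset.Icc 2 T, ∑ i, u t i
            - ∑ t ∈ Finset.Icc 2 T, dtv (u t) (u (t - 1))) / η
          * Real.log (1 / (1 - α)) := by
  obtain ⟨hα0, hα1⟩ := hα
  have hd0 : 0 < d := hd
  haveI : Nonempty (Fin d) := Fin.pos_iff_nonempty.1 hd0
  have hdR : (0:ℝ) < (d:ℝ) := by exact_mod_cast hd0
  -- basic invariants
  have key : ∀ t, 1 ≤ t → t ≤ T → (∀ j, 0 < p t j) ∧ (∑ i, p t i = 1) := by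
    intro t ht1
    induction t, ht1 using Nat.le_induction with
    | base =>
      intro _
      constructor
      · intro j; rw [hp1]; positivity
      · simp only [hp1]
        rw [Finset.sum_const, Finset.card_univ, Fintype.card_fin, nsmul_eq_mul]
        field_simp
    | succ n hn ih =>
      intro hle
      have hnT : n ≤ T := by omega
      have hmem : n ∈ Finset.Icc 1 T := Finset.mem_Icc.2 ⟨hn, hnT⟩
      obtain ⟨hpos, hsum⟩ := ih hnT
      have hW : 0 < ∑ i, p n i * Real.exp (-η * ℓ n i) :=
        Finset.sum_pos (fun i _ => mul_pos (hpos i) (Real.exp_pos _)) Finset.univ_nonempty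
      have hvpos : ∀ j, 0 < v (n + 1) j := by
        intro j; rw [hv n hmem j]
        exact div_pos (mul_pos (hpos j) (Real.exp_pos _)) hW
      constructor
      · intro j
        rw [hshare n hmem j]
        have := hvpos j
        have : 0 < α / d := by positivity
        nlinarith [hvpos j]
      · have hvs : ∑ j, v (n + 1) j = 1 := by
          simp only [fun j => hv n hmem j]
          rw [← Finset.sum_div, div_self hW.ne']
        calc ∑ j, p (n + 1) j = ∑ j, (α / d + (1 - α) * v (n + 1) j) :=
              Finset.sum_congr rfl fun j _ => hshare n hmem j
          _ = 1 := by
              rw [Finset.sum_add_distrib, ← Finset.mul_sum, hvs, Finset.sum_const,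
                Finset.card_univ, Fintype.card_fin, nsmul_eq_mul]
              field_simp
              ring
  have hppos : ∀ t ∈ Finset.Icc 1 T, ∀ j, 0 < p t j := fun t ht j =>
    (key t (Finset.mem_Icc.1 ht).1 (Finset.mem_Icc.1 ht).2).1 j
  have hpsum : ∀ t ∈ Finset.Icc 1 T, ∑ i, p t i = 1 := fun t ht =>
    (key t (Finset.mem_Icc.1 ht).1 (Finset.mem_Icc.1 ht).2).2
  have hW : ∀ t ∈ Finset.Icc 1 T, 0 < ∑ i, p t i * Real.exp (-η * ℓ t i) := fun t ht =>
    Finset.sum_pos (fun i _ => mul_pos (hppos t ht i) (Real.exp_pos _)) Finset.univ_nonempty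
  have hvpos : ∀ t ∈ Finset.Icc 1 T, ∀ j, 0 < v (t + 1) j := by
    intro t ht j
    rw [hv t ht j]
    exact div_pos (mul_pos (hppos t ht j) (Real.exp_pos _)) (hW t ht)
  have hvsum : ∀ t ∈ Finset.Icc 1 T, ∑ j, v (t + 1) j = 1 := by
    intro t ht
    simp only [fun j => hv t ht j]
    rw [← Finset.sum_div, div_self (hW t ht).ne']
  have hvle1 : ∀ t ∈ Finset.Icc 1 T, ∀ j, v (t + 1) j ≤ 1 := by
    intro t ht j
    rw [← hvsum t ht]
    exact Finset.single_le_sum (fun i _ => (hvpos t ht i).le) (Finset.mem_univ j)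
  -- per-step bound
  have step : ∀ t ∈ Finset.Icc 1 T,
      (∑ i, u t i) * (∑ i, p t i * ℓ t i) - ∑ i, u t i * ℓ t i
        ≤ (η / 8) * (∑ i, u t i)
          + (1 / η) * ∑ i, u t i * (Real.log (v (t + 1) i) - Real.log (p t i)) := by
    intro t ht
    set W := ∑ i, p t i * Real.exp (-η * ℓ t i) with hWdef
    have hWpos : 0 < W := hW t ht
    have hμ := hoeffding_fin hd0 (p t) (ℓ t) (hppos t ht) (hpsum t ht) (hℓ t ht) (-η)
    rw [neg_sq, ← hWdef] at hμ
    have h2 : (∑ i, p t i * ℓ t i) ≤ η / 8 - Real.log W / η := by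
      have h3 : Real.log W / η ≤ -(∑ i, p t i * ℓ t i) + η / 8 := by
        rw [div_le_iff₀ hη]
        nlinarith [hμ]
      linarith
    have per : ∀ i, (∑ i, p t i * ℓ t i) - ℓ t i
        ≤ η / 8 + (1 / η) * (Real.log (v (t + 1) i) - Real.log (p t i)) := by
      intro i
      have hlogv : Real.log (v (t + 1) i)
          = Real.log (p t i) + (-η * ℓ t i) - Real.log W := by
        rw [hv t ht i, ← hWdef,
          Real.log_div (mul_pos (hppos t ht i) (Real.exp_pos _)).ne' hWpos.ne',
          Real.log_mul (hppos t ht i).ne' (Real.exp_pos _).ne', Real.log_exp]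
      rw [hlogv]
      have e : (1 / η) * ((Real.log (p t i) + (-η * ℓ t i) - Real.log W)
          - Real.log (p t i)) = -ℓ t i - Real.log W / η := by
        field_simp
        ring
      rw [e]
      linarith [h2]
    have e1 : ∑ i, u t i * ((∑ i, p t i * ℓ t i) - ℓ t i)
        = (∑ i, u t i) * (∑ i, p t i * ℓ t i) - ∑ i, u t i * ℓ t i := by
      simp only [mul_sub]
      rw [Finset.sum_sub_distrib, ← Finset.sum_mul]
    have e2 : ∑ i, u t i * (η / 8 + (1 / η) * (Real.log (v (t + 1) i) - Real.log (p t i)))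
        = (η / 8) * (∑ i, u t i)
          + (1 / η) * ∑ i, u t i * (Real.log (v (t + 1) i) - Real.log (p t i)) := by
      rw [Finset.mul_sum, Finset.mul_sum, ← Finset.sum_add_distrib]
      exact Finset.sum_congr rfl fun i _ => by ring
    rw [← e1, ← e2]
    exact Finset.sum_le_sum fun i _ => mul_le_mul_of_nonneg_left (per i) (hu t ht i)
  -- telescoping bound
  have tele : ∑ t ∈ Finset.Icc 1 T, ∑ i, u t i * (Real.log (v (t + 1) i) - Real.log (p t i))
      ≤ (∑ i, u 1 i) * Real.log d
        + (∑ t ∈ Finset.Icc 2 T, dtv (u t) (u (t - 1))) * Real.log (d / α)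
        + (∑ t ∈ Finset.Icc 2 T, ∑ i, u t i
            - ∑ t ∈ Finset.Icc 2 T, dtv (u t) (u (t - 1))) * Real.log (1 / (1 - α)) := by
    set L1 := Real.log (1 / (1 - α)) with hL1def
    set L2 := Real.log ((d : ℝ) / α) with hL2def
    have hTmem : T ∈ Finset.Icc 1 T := Finset.mem_Icc.2 ⟨hT, le_rfl⟩
    have hBt : ∀ t ∈ Finset.Icc 2 T,
        (∑ i, u (t - 1) i * Real.log (v t i)) - ∑ i, u t i * Real.log (p t i)
          ≤ dtv (u t) (u (t - 1)) * L2 + ((∑ i, u t i) - dtv (u t) (u (t - 1))) * L1 := by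
      intro t ht
      obtain ⟨ht2, htT⟩ := Finset.mem_Icc.1 ht
      have hs : t - 1 ∈ Finset.Icc 1 T := Finset.mem_Icc.2 ⟨by omega, by omega⟩
      have hst : t - 1 + 1 = t := by omega
      have htmem : t ∈ Finset.Icc 1 T := Finset.mem_Icc.2 ⟨by omega, htT⟩
      have hvp : ∀ j, 0 < v t j := fun j => hst ▸ hvpos (t - 1) hs j
      have hvl : ∀ j, v t j ≤ 1 := fun j => hst ▸ hvle1 (t - 1) hs j
      have hps : ∀ j, p t j = α / d + (1 - α) * v t j := fun j => hst ▸ hshare (t - 1) hs j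
      have hpp : ∀ j, 0 < p t j := hppos t htmem
      have hP1 : ∀ j, α / d ≤ p t j := by
        intro j; rw [hps j]; nlinarith [hvp j]
      have hP2 : ∀ j, (1 - α) * v t j ≤ p t j := by
        intro j; rw [hps j]
        have : 0 ≤ α / d := by positivity
        linarith
      have hl1 : ∀ j, Real.log (v t j) - Real.log (p t j) ≤ L1 := by
        intro j
        have h0 := Real.log_le_log (mul_pos (by linarith : (0:ℝ) < 1 - α) (hvp j)) (hP2 j)
        rw [Real.log_mul (by linarith : (1 - α : ℝ) ≠ 0) (hvp j).ne'] at h0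
        have hL1e : L1 = -Real.log (1 - α) := by rw [hL1def, one_div, Real.log_inv]
        linarith
      have hl2 : ∀ j, -Real.log (p t j) ≤ L2 := by
        intro j
        have h0 := Real.log_le_log (by positivity : (0:ℝ) < α / d) (hP1 j)
        have e1 : Real.log (α / (d:ℝ)) = Real.log α - Real.log d :=
          Real.log_div hα0.ne' hdR.ne'
        have e2 : L2 = Real.log d - Real.log α := by
          rw [hL2def]; exact Real.log_div hdR.ne' hα0.ne'
        linarith
      have hl3 : ∀ j, Real.log (v t j) ≤ 0 := fun j => Real.log_nonpos (hvp j).le (hvl j)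
      have hL1nn : 0 ≤ L1 := by
        rw [hL1def]
        apply Real.log_nonneg
        rw [le_div_iff₀ (by linarith : (0:ℝ) < 1 - α)]
        linarith
      set c : Fin d → ℝ := fun i => if u (t - 1) i ≤ u t i then u t i - u (t - 1) i else 0
        with hcdef
      have hc : ∑ i, c i = dtv (u t) (u (t - 1)) := by
        rw [dtv, Finset.sum_filter]
      have hper : ∀ i, u (t - 1) i * Real.log (v t i) - u t i * Real.log (p t i)
          ≤ c i * L2 + (u t i - c i) * L1 := by
        intro i
        by_cases hab : u (t - 1) i ≤ u t i
        · simp only [hcdef, if_pos hab]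
          have e1 := mul_le_mul_of_nonneg_left (hl1 i) (hu (t - 1) hs i)
          have e2 := mul_le_mul_of_nonneg_left (hl2 i) (sub_nonneg.2 hab)
          nlinarith [e1, e2]
        · simp only [hcdef, if_neg hab]
          have e1 := mul_le_mul_of_nonneg_left (hl1 i) (hu t htmem i)
          have e2 : (u (t - 1) i - u t i) * Real.log (v t i) ≤ 0 :=
            mul_nonpos_iff.2 (Or.inl ⟨by linarith [le_of_not_ge hab], hl3 i⟩)
          linarith [e1, e2]
      calc (∑ i, u (t - 1) i * Real.log (v t i)) - ∑ i, u t i * Real.log (p t i)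
          = ∑ i, (u (t - 1) i * Real.log (v t i) - u t i * Real.log (p t i)) :=
            by rw [Finset.sum_sub_distrib]
        _ ≤ ∑ i, (c i * L2 + (u t i - c i) * L1) := Finset.sum_le_sum fun i _ => hper i
        _ = dtv (u t) (u (t - 1)) * L2 + ((∑ i, u t i) - dtv (u t) (u (t - 1))) * L1 := by
            rw [Finset.sum_add_distrib, ← Finset.sum_mul, ← Finset.sum_mul,
              Finset.sum_sub_distrib, hc]
    have r0 : ∑ t ∈ Finset.Icc 1 T, ∑ i, u t i * (Real.log (v (t + 1) i) - Real.log (p t i))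
        = (∑ t ∈ Finset.Icc 1 T, ∑ i, u t i * Real.log (v (t + 1) i))
          - ∑ t ∈ Finset.Icc 1 T, ∑ i, u t i * Real.log (p t i) := by
      rw [← Finset.sum_sub_distrib]
      refine Finset.sum_congr rfl fun t _ => ?_
      rw [← Finset.sum_sub_distrib]
      exact Finset.sum_congr rfl fun i _ => by ring
    have r1 : ∑ t ∈ Finset.Icc 1 T, ∑ i, u t i * Real.log (v (t + 1) i)
        = ∑ t ∈ Finset.Icc 2 (T + 1), ∑ i, u (t - 1) i * Real.log (v t i) := by
      have hmap : Finset.Icc 2 (T + 1)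
          = Finset.map (addRightEmbedding 1) (Finset.Icc 1 T) := by
        rw [Finset.map_add_right_Icc]
      rw [hmap, Finset.sum_map]
      exact Finset.sum_congr rfl fun t _ => by simp [addRightEmbedding_apply]
    have r2 : ∑ t ∈ Finset.Icc 2 (T + 1), ∑ i, u (t - 1) i * Real.log (v t i)
        = (∑ t ∈ Finset.Icc 2 T, ∑ i, u (t - 1) i * Real.log (v t i))
          + ∑ i, u (T + 1 - 1) i * Real.log (v (T + 1) i) :=
      Finset.sum_Icc_succ_top (show 2 ≤ T + 1 by omega) _
    have r3 : ∑ t ∈ Finset.Icc 1 T, ∑ i, u t i * Real.log (p t i)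
        = (∑ i, u 1 i * Real.log (p 1 i))
          + ∑ t ∈ Finset.Icc 2 T, ∑ i, u t i * Real.log (p t i) := by
      rw [Finset.Icc_eq_cons_Ioc hT, Finset.sum_cons,
        show Finset.Ioc 1 T = Finset.Icc 2 T from by rw [← Finset.Icc_add_one_left_eq_Ioc]; rfl]
    have hTop : ∑ i, u (T + 1 - 1) i * Real.log (v (T + 1) i) ≤ 0 := by
      refine Finset.sum_nonpos fun i _ => ?_
      simp only [Nat.add_sub_cancel]
      exact mul_nonpos_iff.2 (Or.inl ⟨hu T hTmem i,
        Real.log_nonpos (hvpos T hTmem i).le (hvle1 T hTmem i)⟩)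
    have hF1 : (∑ i, u 1 i * Real.log (p 1 i)) = -((∑ i, u 1 i) * Real.log d) := by
      simp only [hp1, one_div, Real.log_inv]
      rw [← Finset.sum_mul]
      ring
    have hsum2 := Finset.sum_le_sum hBt
    rw [r0, r1, r2, r3, hF1]
    rw [Finset.sum_sub_distrib] at hsum2
    have edist : ∑ t ∈ Finset.Icc 2 T,
        (dtv (u t) (u (t - 1)) * L2 + ((∑ i, u t i) - dtv (u t) (u (t - 1))) * L1)
        = (∑ t ∈ Finset.Icc 2 T, dtv (u t) (u (t - 1))) * L2
          + ((∑ t ∈ Finset.Icc 2 T, ∑ i, u t i)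
            - ∑ t ∈ Finset.Icc 2 T, dtv (u t) (u (t - 1))) * L1 := by
      rw [Finset.sum_add_distrib, ← Finset.sum_mul, ← Finset.sum_mul, Finset.sum_sub_distrib]
    rw [edist] at hsum2
    linarith [hTop, hsum2]
  -- combine
  calc ∑ t ∈ Finset.Icc 1 T, (∑ i, u t i) * (∑ i, p t i * ℓ t i)
        - ∑ t ∈ Finset.Icc 1 T, ∑ i, u t i * ℓ t i
      = ∑ t ∈ Finset.Icc 1 T,
          ((∑ i, u t i) * (∑ i, p t i * ℓ t i) - ∑ i, u t i * ℓ t i) := by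
        rw [Finset.sum_sub_distrib]
    _ ≤ ∑ t ∈ Finset.Icc 1 T, ((η / 8) * (∑ i, u t i)
          + (1 / η) * ∑ i, u t i * (Real.log (v (t + 1) i) - Real.log (p t i))) :=
        Finset.sum_le_sum step
    _ = (η / 8) * (∑ t ∈ Finset.Icc 1 T, ∑ i, u t i)
          + (1 / η) * ∑ t ∈ Finset.Icc 1 T,
              ∑ i, u t i * (Real.log (v (t + 1) i) - Real.log (p t i)) := by
        rw [Finset.sum_add_distrib, ← Finset.mul_sum, ← Finset.mul_sum]
    _ ≤ (η / 8) * (∑ t ∈ Finset.Icc 1 T, ∑ i, u t i)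
          + (1 / η) * ((∑ i, u 1 i) * Real.log d
            + (∑ t ∈ Finset.Icc 2 T, dtv (u t) (u (t - 1))) * Real.log (d / α)
            + (∑ t ∈ Finset.Icc 2 T, ∑ i, u t i
                - ∑ t ∈ Finset.Icc 2 T, dtv (u t) (u (t - 1))) * Real.log (1 / (1 - α))) := by
        have h1η : (0:ℝ) ≤ 1 / η := by positivity
        exact add_le_add le_rfl (mul_le_mul_of_nonneg_left tele h1η)
    _ = (∑ i, u 1 i) * Real.log d / η
        + (η / 8) * ∑ t ∈ Finset.Icc 1 T, ∑ i, u t i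
        + (∑ t ∈ Finset.Icc 2 T, dtv (u t) (u (t - 1))) / η * Real.log (d / α)
        + (∑ t ∈ Finset.Icc 2 T, ∑ i, u t i
            - ∑ t ∈ Finset.Icc 2 T, dtv (u t) (u (t - 1))) / η
          * Real.log (1 / (1 - α)) := by ring
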